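/- Let $K$ be a totally real number field with $[K : \mathbb{Q}] \geq 2$ and let $n \geq 2$ be an integer. Then there exist elements $f, g \in \mathcal{O}_K$ with $g \neq 0$ such that both $f - g$ and $f + (n-1)g$ are units of $\mathcal{O}_K$. -/

import Mathlib

open NumberField

set_option maxSynthPendingDepth 2

/-- In the ring of integers of a totally real number field of degree at least `2`, for any
`n ≥ 2` there exist `f, g` with `g ≠ 0` such that `f - g` and `f + (n - 1) g` are units. -/
theorem exists_f_g_units_of_totallyReal (K : Type*) [Field K] [NumberField K]
    (htr : ∀ φ : K →+* ℂ, NumberField.ComplexEmbedding.IsReal φ)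
    (hd : 2 ≤ Module.finrank ℚ K) (n : ℕ) (hn : 2 ≤ n) :
    ∃ f g : 𝓞 K, g ≠ 0 ∧ IsUnit (f - g) ∧ IsUnit (f + ((n - 1 : ℕ) : 𝓞 K) * g) := by
  classical
  -- Step 1: the unit rank is positive.
  have hcard : 2 ≤ Fintype.card (InfinitePlace K) := by
    have h1 : NumberField.InfinitePlace.nrRealPlaces K = Module.finrank ℚ K := by
      rw [← NumberField.InfinitePlace.card_real_embeddings]
      rw [← NumberField.Embeddings.card K ℂ]
      exact Fintype.card_congr (Equiv.subtypeUnivEquiv htr)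
    rw [NumberField.InfinitePlace.card_eq_nrRealPlaces_add_nrComplexPlaces]
    omega
  -- Step 2: there is a unit of infinite order.
  have hrank : 0 < NumberField.Units.rank K := by
    rw [NumberField.Units.rank]; omega
  obtain ⟨u, hu⟩ : ∃ u : (𝓞 K)ˣ, ¬IsOfFinOrder u := by
    have hb : NumberField.Units.basisModTorsion K ⟨0, hrank⟩ ≠ 0 :=
      (NumberField.Units.basisModTorsion K).ne_zero _
    obtain ⟨u, hu⟩ := QuotientGroup.mk_surjective
      ((NumberField.Units.basisModTorsion K ⟨0, hrank⟩).toMul)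
    refine ⟨u, fun hfin => hb ?_⟩
    have h1 : (QuotientGroup.mk u : (𝓞 K)ˣ ⧸ NumberField.Units.torsion K) = 1 :=
      (QuotientGroup.eq_one_iff u).mpr ((CommGroup.mem_torsion u).mpr hfin)
    rw [h1] at hu
    exact (Additive.toMul.injective (hu.symm.trans rfl)).symm ▸ rfl
  -- Step 3: pigeonhole in the finite quotient 𝓞 K ⧸ (n).
  have hn0 : (n : 𝓞 K) ≠ 0 := Nat.cast_ne_zero.mpr (by omega)
  haveI : Finite (𝓞 K ⧸ Ideal.span {(n : 𝓞 K)}) :=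
    (Ideal.finiteQuotientOfFreeOfNeBot _
      (by simp [Ideal.span_singleton_eq_bot, hn0]))
  obtain ⟨i, j, hij, hmap⟩ := Finite.exists_ne_map_eq_of_infinite
    (fun k : ℕ => Ideal.Quotient.mk (Ideal.span {(n : 𝓞 K)}) ((u ^ k : (𝓞 K)ˣ) : 𝓞 K))
  have hdvd : (n : 𝓞 K) ∣ ((u ^ i : (𝓞 K)ˣ) : 𝓞 K) - ((u ^ j : (𝓞 K)ˣ) : 𝓞 K) := by
    rw [← Ideal.mem_span_singleton]
    exact Ideal.Quotient.eq.mp hmap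
  obtain ⟨c, hc⟩ := hdvd
  refine ⟨c + ((u ^ j : (𝓞 K)ˣ) : 𝓞 K), c, ?_, ?_, ?_⟩
  · intro h0
    apply hij
    rw [h0, mul_zero] at hc
    have h2 : (u ^ i : (𝓞 K)ˣ) = u ^ j := Units.ext (sub_eq_zero.mp hc)
    exact injective_pow_iff_not_isOfFinOrder.mpr hu h2
  · have h3 : (c + ((u ^ j : (𝓞 K)ˣ) : 𝓞 K)) - c = ((u ^ j : (𝓞 K)ˣ) : 𝓞 K) := by ring
    rw [h3]
    exact (u ^ j).isUnit
  · have hn1 : ((n - 1 : ℕ) : 𝓞 K) = (n : 𝓞 K) - 1 := by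
      push_cast [Nat.cast_sub (by omega : 1 ≤ n)]
      ring
    have h4 : (c + ((u ^ j : (𝓞 K)ˣ) : 𝓞 K)) + ((n - 1 : ℕ) : 𝓞 K) * c
        = ((u ^ i : (𝓞 K)ˣ) : 𝓞 K) := by
      rw [hn1]
      linear_combination -hc
    rw [h4]
    exact (u ^ i).isUnit
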